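/- Let f : 𝔻 → ℝ be a C² function on the unit disc, and fix 0 < r < 1. Then ∫₀¹ f(r e^{2πiθ}) dθ - f(0) = (1/2π) ∫_{|ζ|<r} log(r/|ζ|) · Δf(ζ) dA(ζ), where Δ is the Euclidean Laplacian and dA is Lebesgue area measure on ℂ. -/

import Mathlib

open Real MeasureTheory

/-- The Euclidean Laplacian of `f : ℂ → ℝ`: `Δf = f_xx + f_yy`, expressed via the second
iterated Fréchet derivative. -/
noncomputable def lapl (f : ℂ → ℝ) (z : ℂ) : ℝ :=
  iteratedFDeriv ℝ 2 f z ![1, 1] + iteratedFDeriv ℝ 2 f z ![Complex.I, Complex.I]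

noncomputable def circ (θ : ℝ) : ℂ := Complex.exp (2 * Real.pi * Complex.I * θ)

lemma circ_hasDerivAt (θ : ℝ) :
    HasDerivAt circ ((2 * Real.pi * Complex.I) * circ θ) θ := by
  have h1 : HasDerivAt (fun t : ℝ => ((t : ℂ))) 1 θ := by
    simpa using (hasDerivAt_id _).ofReal_comp
  have h2 : HasDerivAt (fun t : ℝ => (2 * Real.pi * Complex.I) * (t : ℂ))
      (2 * Real.pi * Complex.I) θ := by
    simpa using h1.const_mul (2 * Real.pi * Complex.I)
  have h3 := h2.cexp
  have he : Complex.exp (2 * Real.pi * Complex.I * (θ:ℂ)) * (2 * Real.pi * Complex.I)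
      = 2 * Real.pi * Complex.I * circ θ := by rw [circ]; ring
  rw [he] at h3
  exact h3

lemma circ_continuous : Continuous circ :=
  Complex.continuous_exp.comp (by continuity)

lemma circ_abs (θ : ℝ) : ‖circ θ‖ = 1 := by
  rw [circ, Complex.norm_exp]
  norm_num [Complex.mul_re]

lemma circ_zero : circ 0 = 1 := by simp [circ]

lemma circ_one : circ 1 = 1 := by
  have : (2 * Real.pi * Complex.I * (1:ℝ) : ℂ) = 2 * Real.pi * Complex.I := by push_cast; ring
  rw [circ, this, Complex.exp_two_pi_mul_I]

lemma rot (B : ℂ →L[ℝ] ℂ →L[ℝ] ℝ) (u : ℂ) (hu : ‖u‖ = 1) :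
    B u u + B (Complex.I * u) (Complex.I * u) = B 1 1 + B Complex.I Complex.I := by
  set a := u.re
  set b := u.im
  have hab : a ^ 2 + b ^ 2 = 1 := by
    have := Complex.sq_norm u
    rw [hu] at this
    have h2 : Complex.normSq u = u.re * u.re + u.im * u.im := Complex.normSq_apply u
    nlinarith [this, h2]
  have h1 : u = a • (1 : ℂ) + b • Complex.I := by
    simp [Complex.real_smul]
    exact (Complex.re_add_im u).symm
  have h2 : Complex.I * u = (-b) • (1 : ℂ) + a • Complex.I := by
    simp only [Complex.real_smul]
    apply Complex.ext <;> simp [a, b]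
  rw [h2]
  nth_rewrite 1 [h1]
  nth_rewrite 1 [h1]
  simp only [map_add, _root_.map_smul, ContinuousLinearMap.add_apply, ContinuousLinearMap.smul_apply,
    smul_eq_mul, ContinuousLinearMap.coe_smul', Pi.smul_apply]
  linear_combination (B 1 1 + B Complex.I Complex.I) * hab

lemma lapl_eq (f : ℂ → ℝ) (z : ℂ) :
    lapl f z = fderiv ℝ (fderiv ℝ f) z 1 1 +
      fderiv ℝ (fderiv ℝ f) z Complex.I Complex.I := by
  rw [lapl, iteratedFDeriv_two_apply, iteratedFDeriv_two_apply]
  simp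

lemma hasDerivAt_param (F F' : ℝ → ℝ → ℝ) (C r' ρ₀ : ℝ) (hρ₀ : |ρ₀| < r')
    (hcont : ∀ ρ, |ρ| < r' → Continuous (F ρ))
    (hcont' : Continuous (F' ρ₀))
    (hbound : ∀ θ ρ, |ρ| < r' → |F' ρ θ| ≤ C)
    (hderiv : ∀ θ ρ, |ρ| < r' → HasDerivAt (fun x => F x θ) (F' ρ θ) ρ) :
    HasDerivAt (fun ρ => ∫ θ in (0:ℝ)..1, F ρ θ) (∫ θ in (0:ℝ)..1, F' ρ₀ θ) ρ₀ := by
  set ε := r' - |ρ₀| with hε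
  have hε0 : 0 < ε := by simp [hε]; linarith
  have hballs : ∀ x ∈ Metric.ball ρ₀ ε, |x| < r' := by
    intro x hx
    rw [Metric.mem_ball, Real.dist_eq] at hx
    have h1 : |x| ≤ |x - ρ₀| + |ρ₀| := by
      have := abs_add_le (x - ρ₀) ρ₀; simpa using this
    linarith
  refine (intervalIntegral.hasDerivAt_integral_of_dominated_loc_of_deriv_le
    (bound := fun _ => C) (Metric.ball_mem_nhds ρ₀ hε0) ?_ ?_ ?_ ?_ ?_ ?_).2
  · filter_upwards [Metric.ball_mem_nhds ρ₀ hε0] with x hx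
    exact ((hcont x (hballs x hx))).aestronglyMeasurable
  · exact (hcont ρ₀ hρ₀).intervalIntegrable 0 1
  · exact hcont'.aestronglyMeasurable
  · filter_upwards with θ _ x hx
    exact hbound θ x (hballs x hx)
  · exact intervalIntegrable_const
  · filter_upwards with θ _ x hx
    exact hderiv θ x (hballs x hx)

section Main
variable (f : ℂ → ℝ)

noncomputable def M (ρ : ℝ) : ℝ := ∫ θ in (0:ℝ)..1, f ((ρ:ℂ) * circ θ)
noncomputable def M1 (ρ : ℝ) : ℝ :=
  ∫ θ in (0:ℝ)..1, (fderiv ℝ f ((ρ:ℂ) * circ θ)) (circ θ)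
noncomputable def M2 (ρ : ℝ) : ℝ :=
  ∫ θ in (0:ℝ)..1, (fderiv ℝ (fderiv ℝ f) ((ρ:ℂ) * circ θ)) (circ θ) (circ θ)

variable {f}

lemma mem_ball_mul {ρ : ℝ} (hρ : |ρ| < 1) (θ : ℝ) :
    (ρ:ℂ) * circ θ ∈ Metric.ball (0:ℂ) 1 := by
  simp only [Metric.mem_ball, dist_zero_right, norm_mul,
    Complex.norm_real, Real.norm_eq_abs, circ_abs, mul_one]
  exact hρ

variable (hf : ContDiffOn ℝ 2 f (Metric.ball 0 1))
include hf

lemma contOn_f' : ContinuousOn (fderiv ℝ f) (Metric.ball (0:ℂ) 1) :=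
  (hf.fderiv_of_isOpen Metric.isOpen_ball (le_refl 2) (m := 1)).continuousOn

lemma contOn_f'' : ContinuousOn (fderiv ℝ (fderiv ℝ f)) (Metric.ball (0:ℂ) 1) :=
  ((hf.fderiv_of_isOpen Metric.isOpen_ball (le_refl 2) (m := 1)).fderiv_of_isOpen
    Metric.isOpen_ball (le_refl 1) (m := 0)).continuousOn

lemma hasF1 {z : ℂ} (hz : z ∈ Metric.ball (0:ℂ) 1) :
    HasFDerivAt f (fderiv ℝ f z) z :=
  ((hf.differentiableOn (by norm_num)).differentiableAt
    (Metric.isOpen_ball.mem_nhds hz)).hasFDerivAt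

lemma hasF2 {z : ℂ} (hz : z ∈ Metric.ball (0:ℂ) 1) :
    HasFDerivAt (fderiv ℝ f) (fderiv ℝ (fderiv ℝ f) z) z :=
  (((hf.fderiv_of_isOpen Metric.isOpen_ball (le_refl 2) (m := 1)).differentiableOn
    one_ne_zero).differentiableAt (Metric.isOpen_ball.mem_nhds hz)).hasFDerivAt

lemma contOn_lapl : ContinuousOn (lapl f) (Metric.ball (0:ℂ) 1) := by
  have h := contOn_f'' hf
  have h1 : ContinuousOn (fun z => fderiv ℝ (fderiv ℝ f) z 1 1 +
      fderiv ℝ (fderiv ℝ f) z Complex.I Complex.I) (Metric.ball (0:ℂ) 1) :=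
    (((h.clm_apply continuousOn_const).clm_apply continuousOn_const).add
      ((h.clm_apply continuousOn_const).clm_apply continuousOn_const))
  exact h1.congr fun z _ => lapl_eq f z

omit hf in
lemma mem_closedBall_mul {ρ r' : ℝ} (h : |ρ| ≤ r') (θ : ℝ) :
    (ρ:ℂ) * circ θ ∈ Metric.closedBall (0:ℂ) r' := by
  simp only [Metric.mem_closedBall, dist_zero_right, norm_mul,
    Complex.norm_real, Real.norm_eq_abs, circ_abs, mul_one]
  exact h

omit hf in
lemma hasDerivAt_coe_mul (ρ : ℝ) (θ : ℝ) :
    HasDerivAt (fun x : ℝ => (x:ℂ) * circ θ) (circ θ) ρ := by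
  have h1 : HasDerivAt (fun t : ℝ => ((t : ℂ))) 1 ρ := by
    simpa using (hasDerivAt_id _).ofReal_comp
  simpa using h1.mul_const (circ θ)

lemma hasDerivAt_f_rad {ρ : ℝ} (hρ : |ρ| < 1) (θ : ℝ) :
    HasDerivAt (fun x : ℝ => f ((x:ℂ) * circ θ))
      (fderiv ℝ f ((ρ:ℂ) * circ θ) (circ θ)) ρ :=
  (hasF1 hf (mem_ball_mul hρ θ)).comp_hasDerivAt ρ (hasDerivAt_coe_mul ρ θ)

lemma hasDerivAt_f'_rad {ρ : ℝ} (hρ : |ρ| < 1) (θ : ℝ) :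
    HasDerivAt (fun x : ℝ => fderiv ℝ f ((x:ℂ) * circ θ) (circ θ))
      (fderiv ℝ (fderiv ℝ f) ((ρ:ℂ) * circ θ) (circ θ) (circ θ)) ρ := by
  have hC : HasDerivAt (fun x : ℝ => fderiv ℝ f ((x:ℂ) * circ θ))
      (fderiv ℝ (fderiv ℝ f) ((ρ:ℂ) * circ θ) (circ θ)) ρ :=
    (hasF2 hf (mem_ball_mul hρ θ)).comp_hasDerivAt ρ (hasDerivAt_coe_mul ρ θ)
  simpa using hC.clm_apply (hasDerivAt_const ρ (circ θ))

lemma cont_theta_f {ρ : ℝ} (hρ : |ρ| < 1) :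
    Continuous (fun θ : ℝ => f ((ρ:ℂ) * circ θ)) :=
  hf.continuousOn.comp_continuous (continuous_const.mul circ_continuous)
    (fun θ => mem_ball_mul hρ θ)

lemma cont_theta_f' {ρ : ℝ} (hρ : |ρ| < 1) :
    Continuous (fun θ : ℝ => fderiv ℝ f ((ρ:ℂ) * circ θ) (circ θ)) :=
  ((contOn_f' hf).comp_continuous (continuous_const.mul circ_continuous)
    (fun θ => mem_ball_mul hρ θ)).clm_apply circ_continuous

lemma cont_theta_f'' {ρ : ℝ} (hρ : |ρ| < 1) :
    Continuous (fun θ : ℝ => fderiv ℝ (fderiv ℝ f) ((ρ:ℂ) * circ θ) (circ θ) (circ θ)) :=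
  (((contOn_f'' hf).comp_continuous (continuous_const.mul circ_continuous)
    (fun θ => mem_ball_mul hρ θ)).clm_apply circ_continuous).clm_apply circ_continuous

lemma hasDerivAt_M {r' : ℝ} (h1 : r' < 1) {ρ₀ : ℝ} (hρ₀ : |ρ₀| < r') :
    HasDerivAt (M f) (M1 f ρ₀) ρ₀ := by
  have hsub : Metric.closedBall (0:ℂ) r' ⊆ Metric.ball 0 1 := Metric.closedBall_subset_ball h1
  obtain ⟨C, hC⟩ := (isCompact_closedBall (0:ℂ) r').exists_bound_of_continuousOn
    ((contOn_f' hf).mono hsub)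
  have hlt1 : ∀ ρ : ℝ, |ρ| < r' → |ρ| < 1 := fun ρ h => h.trans h1
  exact hasDerivAt_param (fun ρ θ => f ((ρ:ℂ) * circ θ))
    (fun ρ θ => fderiv ℝ f ((ρ:ℂ) * circ θ) (circ θ)) C r' ρ₀ hρ₀
    (fun ρ hρ => cont_theta_f hf (hlt1 ρ hρ))
    (cont_theta_f' hf (hlt1 ρ₀ hρ₀))
    (fun θ ρ hρ => by
      calc |fderiv ℝ f ((ρ:ℂ) * circ θ) (circ θ)|
          ≤ ‖fderiv ℝ f ((ρ:ℂ) * circ θ)‖ * ‖circ θ‖ :=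
            (fderiv ℝ f ((ρ:ℂ) * circ θ)).le_opNorm (circ θ)
        _ ≤ C := by
            rw [circ_abs, mul_one]
            exact hC _ (mem_closedBall_mul hρ.le θ))
    (fun θ ρ hρ => hasDerivAt_f_rad hf (hlt1 ρ hρ) θ)

lemma hasDerivAt_M1 {r' : ℝ} (h1 : r' < 1) {ρ₀ : ℝ} (hρ₀ : |ρ₀| < r') :
    HasDerivAt (M1 f) (M2 f ρ₀) ρ₀ := by
  have hsub : Metric.closedBall (0:ℂ) r' ⊆ Metric.ball 0 1 := Metric.closedBall_subset_ball h1
  obtain ⟨C, hC⟩ := (isCompact_closedBall (0:ℂ) r').exists_bound_of_continuousOn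
    (f := fderiv ℝ (fderiv ℝ f)) ((contOn_f'' hf).mono hsub)
  have hlt1 : ∀ ρ : ℝ, |ρ| < r' → |ρ| < 1 := fun ρ h => h.trans h1
  exact hasDerivAt_param (fun ρ θ => fderiv ℝ f ((ρ:ℂ) * circ θ) (circ θ))
    (fun ρ θ => fderiv ℝ (fderiv ℝ f) ((ρ:ℂ) * circ θ) (circ θ) (circ θ)) C r' ρ₀ hρ₀
    (fun ρ hρ => cont_theta_f' hf (hlt1 ρ hρ))
    (cont_theta_f'' hf (hlt1 ρ₀ hρ₀))
    (fun θ ρ hρ => by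
      set B := fderiv ℝ (fderiv ℝ f) ((ρ:ℂ) * circ θ)
      calc |B (circ θ) (circ θ)| ≤ ‖B (circ θ)‖ * ‖circ θ‖ := (B (circ θ)).le_opNorm _
        _ ≤ ‖B‖ * ‖circ θ‖ * ‖circ θ‖ := by
            have := B.le_opNorm (circ θ)
            have h0 : (0:ℝ) ≤ ‖circ θ‖ := norm_nonneg _
            nlinarith [norm_nonneg (B (circ θ))]
        _ ≤ C := by
            rw [circ_abs, mul_one, mul_one]
            exact hC _ (mem_closedBall_mul hρ.le θ))
    (fun θ ρ hρ => hasDerivAt_f'_rad hf (hlt1 ρ hρ) θ)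

omit hf in
lemma clm_real_mul (A : ℂ →L[ℝ] ℝ) (c : ℝ) (v : ℂ) : A ((c:ℂ) * v) = c * A v := by
  rw [← Complex.real_smul, A.map_smul, smul_eq_mul]

omit hf in
lemma clm2_real_mul (B : ℂ →L[ℝ] ℂ →L[ℝ] ℝ) (c : ℝ) (v w : ℂ) :
    B ((c:ℂ) * v) w = c * B v w := by
  rw [← Complex.real_smul, B.map_smul, ContinuousLinearMap.smul_apply, smul_eq_mul]

lemma cont_theta_f''I {ρ : ℝ} (hρ : |ρ| < 1) :
    Continuous (fun θ : ℝ => fderiv ℝ (fderiv ℝ f) ((ρ:ℂ) * circ θ)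
      (Complex.I * circ θ) (Complex.I * circ θ)) :=
  (((contOn_f'' hf).comp_continuous (continuous_const.mul circ_continuous)
    (fun θ => mem_ball_mul hρ θ)).clm_apply
      (continuous_const.mul circ_continuous)).clm_apply (continuous_const.mul circ_continuous)

lemma stepB {ρ : ℝ} (h0 : 0 < ρ) (h1 : ρ < 1) :
    ∫ θ in (0:ℝ)..1, ρ * (fderiv ℝ (fderiv ℝ f) ((ρ:ℂ) * circ θ)
      (Complex.I * circ θ) (Complex.I * circ θ)) = M1 f ρ := by
  have hρ1 : |ρ| < 1 := by rw [abs_of_pos h0]; exact h1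
  set G : ℝ → ℝ := fun θ => (2 * Real.pi)⁻¹ * (fderiv ℝ f ((ρ:ℂ) * circ θ) (Complex.I * circ θ))
    with hGdef
  set g : ℝ → ℝ := fun θ => ρ * (fderiv ℝ (fderiv ℝ f) ((ρ:ℂ) * circ θ)
      (Complex.I * circ θ) (Complex.I * circ θ)) - fderiv ℝ f ((ρ:ℂ) * circ θ) (circ θ)
    with hgdef
  have hG : ∀ θ : ℝ, HasDerivAt G (g θ) θ := by
    intro θ
    have hz := mem_ball_mul hρ1 θ
    have hc : HasDerivAt (fun t : ℝ => (ρ:ℂ) * circ t)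
        ((ρ:ℂ) * (2 * Real.pi * Complex.I * circ θ)) θ := (circ_hasDerivAt θ).const_mul (ρ:ℂ)
    have hB : HasDerivAt (fun t : ℝ => fderiv ℝ f ((ρ:ℂ) * circ t))
        (fderiv ℝ (fderiv ℝ f) ((ρ:ℂ) * circ θ) ((ρ:ℂ) * (2 * Real.pi * Complex.I * circ θ))) θ :=
      (hasF2 hf hz).comp_hasDerivAt θ hc
    have hI : HasDerivAt (fun t : ℝ => Complex.I * circ t)
        (Complex.I * (2 * Real.pi * Complex.I * circ θ)) θ := (circ_hasDerivAt θ).const_mul _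
    have happ := (hB.clm_apply hI).const_mul ((2 * Real.pi)⁻¹)
    have heq : (2 * Real.pi)⁻¹ *
        (fderiv ℝ (fderiv ℝ f) ((ρ:ℂ) * circ θ) ((ρ:ℂ) * (2 * Real.pi * Complex.I * circ θ))
            (Complex.I * circ θ) +
          fderiv ℝ f ((ρ:ℂ) * circ θ) (Complex.I * (2 * Real.pi * Complex.I * circ θ))) = g θ := by
      have e1 : ((ρ:ℂ) * (2 * Real.pi * Complex.I * circ θ))
          = ((ρ * (2 * Real.pi) : ℝ) : ℂ) * (Complex.I * circ θ) := by push_cast; ring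
      have e2 : (Complex.I * (2 * Real.pi * Complex.I * circ θ))
          = ((-(2 * Real.pi) : ℝ) : ℂ) * (circ θ) := by
        push_cast
        rw [show Complex.I * (2 * (Real.pi:ℂ) * Complex.I * circ θ)
            = 2 * (Real.pi:ℂ) * (Complex.I * Complex.I) * circ θ by ring, Complex.I_mul_I]
        ring
      rw [e1, e2, clm2_real_mul, clm_real_mul, hgdef]
      have hπ : (2 * Real.pi) ≠ 0 := by positivity
      field_simp
      ring
    rw [← heq]
    exact happ
  have hgc : Continuous g :=
    (continuous_const.mul (cont_theta_f''I hf hρ1)).sub (cont_theta_f' hf hρ1)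
  have hftc : ∫ θ in (0:ℝ)..1, g θ = G 1 - G 0 :=
    intervalIntegral.integral_eq_sub_of_hasDerivAt (fun θ _ => hG θ)
      (hgc.intervalIntegrable 0 1)
  have hG10 : G 1 = G 0 := by rw [hGdef]; simp [circ_one, circ_zero]
  have hzero : ∫ θ in (0:ℝ)..1, g θ = 0 := by rw [hftc, hG10, sub_self]
  have hsplit : ∫ θ in (0:ℝ)..1, g θ =
      (∫ θ in (0:ℝ)..1, ρ * (fderiv ℝ (fderiv ℝ f) ((ρ:ℂ) * circ θ)
        (Complex.I * circ θ) (Complex.I * circ θ))) - M1 f ρ := by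
    rw [hgdef, M1]
    exact intervalIntegral.integral_sub
      ((continuous_const.mul (cont_theta_f''I hf hρ1)).intervalIntegrable 0 1)
      ((cont_theta_f' hf hρ1).intervalIntegrable 0 1)
  linarith [hsplit ▸ hzero]

lemma stepB' {ρ : ℝ} (h0 : 0 < ρ) (h1 : ρ < 1) :
    ∫ θ in (0:ℝ)..1, lapl f ((ρ:ℂ) * circ θ) = M2 f ρ + M1 f ρ / ρ := by
  have hρ1 : |ρ| < 1 := by rw [abs_of_pos h0]; exact h1
  have hpt : ∀ θ : ℝ, lapl f ((ρ:ℂ) * circ θ) =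
      fderiv ℝ (fderiv ℝ f) ((ρ:ℂ) * circ θ) (circ θ) (circ θ) +
      fderiv ℝ (fderiv ℝ f) ((ρ:ℂ) * circ θ) (Complex.I * circ θ) (Complex.I * circ θ) := by
    intro θ
    rw [lapl_eq, ← rot (fderiv ℝ (fderiv ℝ f) ((ρ:ℂ) * circ θ)) (circ θ) (circ_abs θ)]
  have h2 : ∫ θ in (0:ℝ)..1, lapl f ((ρ:ℂ) * circ θ) = M2 f ρ +
      ∫ θ in (0:ℝ)..1, fderiv ℝ (fderiv ℝ f) ((ρ:ℂ) * circ θ)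
        (Complex.I * circ θ) (Complex.I * circ θ) := by
    rw [M2]
    rw [← intervalIntegral.integral_add ((cont_theta_f'' hf hρ1).intervalIntegrable 0 1)
      ((cont_theta_f''I hf hρ1).intervalIntegrable 0 1)]
    exact intervalIntegral.integral_congr (fun θ _ => hpt θ)
  have h3 : ∫ θ in (0:ℝ)..1, fderiv ℝ (fderiv ℝ f) ((ρ:ℂ) * circ θ)
      (Complex.I * circ θ) (Complex.I * circ θ) = M1 f ρ / ρ := by
    rw [← stepB hf h0 h1, intervalIntegral.integral_const_mul]
    rw [mul_div_cancel_left₀ _ h0.ne']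
  rw [h2, h3]

lemma stepC {r r' : ℝ} (hr0 : 0 < r) (hrr' : r < r') (h1 : r' < 1)
    (hψ : IntegrableOn (fun ρ => Real.log (r / ρ) * (M1 f ρ + ρ * M2 f ρ))
      (Set.Ioc 0 r) volume) :
    ∫ ρ in Set.Ioc 0 r, Real.log (r / ρ) * (M1 f ρ + ρ * M2 f ρ) = M f r - M f 0 := by
  set ψ : ℝ → ℝ := fun ρ => Real.log (r / ρ) * (M1 f ρ + ρ * M2 f ρ) with hψdef
  set H : ℝ → ℝ := fun ρ => Real.log (r / ρ) * (ρ * M1 f ρ) + M f ρ with hHdef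
  have hH : ∀ x : ℝ, 0 < x → x < r' → HasDerivAt H (ψ x) x := by
    intro x hx0 hxr'
    have hxa : |x| < r' := by rw [abs_of_pos hx0]; exact hxr'
    have hlog : HasDerivAt (fun ρ => Real.log (r / ρ)) (0 - x⁻¹) x := by
      have base : HasDerivAt (fun ρ : ℝ => Real.log r - Real.log ρ) (0 - x⁻¹) x :=
        (hasDerivAt_const x (Real.log r)).sub (Real.hasDerivAt_log hx0.ne')
      have heq : (fun ρ : ℝ => Real.log (r / ρ)) =ᶠ[nhds x]
          fun ρ => Real.log r - Real.log ρ := by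
        filter_upwards [eventually_ne_nhds hx0.ne'] with ρ hρ
        rw [Real.log_div hr0.ne' hρ]
      exact base.congr_of_eventuallyEq heq
    have hmul : HasDerivAt (fun ρ => ρ * M1 f ρ) (1 * M1 f x + x * M2 f x) x :=
      (hasDerivAt_id x).mul (hasDerivAt_M1 hf h1 hxa)
    have hsum := (hlog.mul hmul).add (hasDerivAt_M hf h1 hxa)
    have : (0 - x⁻¹) * (x * M1 f x) + Real.log (r / x) * (1 * M1 f x + x * M2 f x) + M1 f x
        = ψ x := by
      rw [hψdef]
      field_simp
      ring
    rw [← this]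
    exact hsum
  have hIcc : IntegrableOn ψ (Set.Icc 0 r) volume := by
    rw [integrableOn_Icc_iff_integrableOn_Ioc]
    exact hψ
  have hucc : Set.uIcc 0 r = Set.Icc 0 r := Set.uIcc_of_le hr0.le
  have hcontP : ContinuousOn (fun x => ∫ t in x..r, ψ t) (Set.Icc 0 r) := by
    have := intervalIntegral.continuousOn_primitive_interval_left (f := ψ)
      (μ := volume) (a := 0) (b := r) (by rw [hucc]; exact hIcc)
    rwa [hucc] at this
  set l := nhdsWithin (0:ℝ) (Set.Ioo 0 r) with hldef
  haveI hlne : l.NeBot := by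
    rw [hldef, ← mem_closure_iff_nhdsWithin_neBot, closure_Ioo hr0.ne]
    exact Set.left_mem_Icc.2 hr0.le
  have tendsto1 : Filter.Tendsto (fun ε => ∫ t in ε..r, ψ t) l
      (nhds (∫ t in (0:ℝ)..r, ψ t)) := by
    have h0mem : (0:ℝ) ∈ Set.Icc 0 r := Set.left_mem_Icc.2 hr0.le
    exact (hcontP 0 h0mem).mono_left (nhdsWithin_mono 0 Set.Ioo_subset_Icc_self)
  have heqfun : ∀ ε ∈ Set.Ioo (0:ℝ) r, (∫ t in ε..r, ψ t) = H r - H ε := by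
    intro ε hε
    apply intervalIntegral.integral_eq_sub_of_hasDerivAt
    · intro x hx
      rw [Set.uIcc_of_le hε.2.le] at hx
      exact hH x (lt_of_lt_of_le hε.1 hx.1) (lt_of_le_of_lt hx.2 hrr')
    · rw [intervalIntegrable_iff_integrableOn_Ioc_of_le hε.2.le]
      exact hψ.mono_set (Set.Ioc_subset_Ioc hε.1.le le_rfl)
  have hr'0 : (0:ℝ) < r' := hr0.trans hrr'
  have h0abs : |(0:ℝ)| < r' := by simpa using hr'0
  have hM1cont : Filter.Tendsto (M1 f) l (nhds (M1 f 0)) :=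
    ((hasDerivAt_M1 hf h1 h0abs).continuousAt.tendsto).mono_left nhdsWithin_le_nhds
  have hMcont : Filter.Tendsto (M f) l (nhds (M f 0)) :=
    ((hasDerivAt_M hf h1 h0abs).continuousAt.tendsto).mono_left nhdsWithin_le_nhds
  have hlogε : Filter.Tendsto (fun ε => Real.log (r / ε) * ε) l (nhds 0) := by
    have h1' : Filter.Tendsto (fun ε : ℝ => Real.log ε * ε) (nhdsWithin 0 (Set.Ioi 0))
        (nhds 0) := by
      simpa using tendsto_log_mul_rpow_nhdsGT_zero one_pos
    have h1'' : Filter.Tendsto (fun ε : ℝ => Real.log ε * ε) l (nhds 0) :=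
      h1'.mono_left (nhdsWithin_mono 0 Set.Ioo_subset_Ioi_self)
    have hid : Filter.Tendsto (fun ε : ℝ => ε) l (nhds 0) :=
      Filter.tendsto_id.mono_left nhdsWithin_le_nhds
    have hA : Filter.Tendsto (fun ε : ℝ => Real.log r * ε - Real.log ε * ε) l
        (nhds (Real.log r * 0 - 0)) := (tendsto_const_nhds.mul hid).sub h1''
    rw [show Real.log r * 0 - 0 = 0 by ring] at hA
    apply hA.congr'
    filter_upwards [self_mem_nhdsWithin] with ε hε
    rw [Real.log_div hr0.ne' (ne_of_gt hε.1)]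
    ring
  have tendsto2 : Filter.Tendsto (fun ε => H r - H ε) l (nhds (H r - M f 0)) := by
    have hcomb : Filter.Tendsto H l (nhds (M f 0)) := by
      have := (hlogε.mul hM1cont).add hMcont
      rw [show (0:ℝ) * M1 f 0 + M f 0 = M f 0 by ring] at this
      apply this.congr
      intro ε
      rw [hHdef]
      ring
    exact tendsto_const_nhds.sub hcomb
  have key : (∫ t in (0:ℝ)..r, ψ t) = H r - M f 0 := by
    refine tendsto_nhds_unique (tendsto1.congr' ?_) tendsto2 |>.symm ▸ ?_
    · filter_upwards [self_mem_nhdsWithin] with ε hε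
      exact heqfun ε hε
    · rfl
  have hHr : H r = M f r := by
    rw [hHdef]
    simp [div_self hr0.ne']
  rw [← intervalIntegral.integral_of_le hr0.le, key, hHr]
omit hf in
lemma polar_symm_eq (p : ℝ × ℝ) :
    Complex.polarCoord.symm p = (p.1:ℂ) * Complex.exp ((p.2:ℂ) * Complex.I) := by
  rw [Complex.polarCoord_symm_apply, Complex.exp_mul_I]
  simp [Complex.ofReal_cos, Complex.ofReal_sin]

omit hf in
lemma abs_exp_I (θ : ℝ) : ‖Complex.exp ((θ:ℂ) * Complex.I)‖ = 1 := by
  rw [Complex.norm_exp]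
  simp

end Main

set_option maxHeartbeats 1600000 in
/-- Riesz/Jensen representation formula: for a `C²` function `f` on the unit disc and
`0 < r < 1`, `∫₀¹ f(r·e^{2πiθ}) dθ - f(0) = (1/2π) ∫_{|ζ|<r} log(r/|ζ|)·Δf(ζ) dA(ζ)`. -/
theorem stmt11 (f : ℂ → ℝ) (hf : ContDiffOn ℝ 2 f (Metric.ball 0 1))
    (r : ℝ) (hr0 : 0 < r) (hr1 : r < 1) :
    (∫ θ in (0:ℝ)..1, f (r * Complex.exp (2 * Real.pi * Complex.I * θ))) - f 0 =
      (1 / (2 * Real.pi)) *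
        ∫ ζ in Metric.ball (0 : ℂ) r, Real.log (r / ‖ζ‖) * lapl f ζ := by
  have hπ : (0:ℝ) < π := Real.pi_pos
  set r' : ℝ := (1 + r) / 2 with hr'def
  have hrr' : r < r' := by rw [hr'def]; linarith
  have hr'1 : r' < 1 := by rw [hr'def]; linarith
  have hr'0 : (0:ℝ) < r' := by rw [hr'def]; linarith
  set w : ℂ → ℝ := fun ζ => Real.log (r / ‖ζ‖) * lapl f ζ with hwdef
  have hsubr : Metric.closedBall (0:ℂ) r ⊆ Metric.ball 0 1 := Metric.closedBall_subset_ball hr1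
  obtain ⟨C, hC⟩ := (isCompact_closedBall (0:ℂ) r).exists_bound_of_continuousOn
    ((contOn_lapl hf).mono hsubr)
  set S : Set (ℝ × ℝ) := Set.Ioo 0 r ×ˢ Set.Ioo (-π) π with hSdef
  set P : ℝ × ℝ → ℝ := fun p =>
    p.1 * (Real.log (r / p.1) * lapl f ((p.1:ℂ) * Complex.exp ((p.2:ℂ) * Complex.I)))
    with hPdef
  have hSmeas : MeasurableSet S := measurableSet_Ioo.prod measurableSet_Ioo
  have hmemz : ∀ p : ℝ × ℝ, p ∈ S →
      ((p.1:ℂ) * Complex.exp ((p.2:ℂ) * Complex.I)) ∈ Metric.ball (0:ℂ) 1 := by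
    intro p hp
    simp only [Metric.mem_ball, dist_zero_right, norm_mul,
      Complex.norm_real, Real.norm_eq_abs, abs_exp_I, mul_one]
    rw [abs_of_pos hp.1.1]
    exact hp.1.2.trans hr1
  have hScont : ContinuousOn P S := by
    intro p hp
    apply ContinuousAt.continuousWithinAt
    have hp1 : 0 < p.1 := hp.1.1
    have hc1 : ContinuousAt (fun q : ℝ × ℝ => q.1) p := continuousAt_fst
    have hc2 : ContinuousAt (fun q : ℝ × ℝ => Real.log (r / q.1)) p := by
      apply ContinuousAt.comp (Real.continuousAt_log (by positivity))
      exact continuousAt_const.div continuousAt_fst hp1.ne'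
    have hmap : ContinuousAt (fun q : ℝ × ℝ => (q.1:ℂ) * Complex.exp ((q.2:ℂ) * Complex.I)) p :=
      ((Complex.continuous_ofReal.comp continuous_fst).mul
          (Complex.continuous_exp.comp
            ((Complex.continuous_ofReal.comp continuous_snd).mul continuous_const))).continuousAt
    have hc3 : ContinuousAt (fun q : ℝ × ℝ =>
        lapl f ((q.1:ℂ) * Complex.exp ((q.2:ℂ) * Complex.I))) p :=
      ContinuousAt.comp (g := lapl f)
        ((contOn_lapl hf).continuousAt (Metric.isOpen_ball.mem_nhds (hmemz p hp))) hmap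
    exact hc1.mul (hc2.mul hc3)
  have hSvol : volume S ≠ ⊤ := by
    rw [hSdef, Measure.volume_eq_prod, Measure.prod_prod, Real.volume_Ioo, Real.volume_Ioo]
    exact ENNReal.mul_ne_top ENNReal.ofReal_ne_top ENNReal.ofReal_ne_top
  have hPbound : ∀ p ∈ S, ‖P p‖ ≤ r * C := by
    intro p hp
    have hp1 : 0 < p.1 := hp.1.1
    have hpr : p.1 < r := hp.1.2
    have hlog0 : 0 ≤ Real.log (r / p.1) :=
      Real.log_nonneg (by rw [le_div_iff₀ hp1]; linarith)
    have hlogr : p.1 * Real.log (r / p.1) ≤ r := by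
      have h1 : Real.log (r / p.1) ≤ r / p.1 - 1 :=
        Real.log_le_sub_one_of_pos (by positivity)
      have h2 : p.1 * (r / p.1 - 1) = r - p.1 := by field_simp
      nlinarith
    have hlapl : |lapl f ((p.1:ℂ) * Complex.exp ((p.2:ℂ) * Complex.I))| ≤ C := by
      have hmem : ((p.1:ℂ) * Complex.exp ((p.2:ℂ) * Complex.I)) ∈ Metric.closedBall (0:ℂ) r := by
        simp only [Metric.mem_closedBall, dist_zero_right, norm_mul,
          Complex.norm_real, Real.norm_eq_abs, abs_exp_I, mul_one]
        rw [abs_of_pos hp1]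
        exact hpr.le
      exact hC _ hmem
    have hCnn : 0 ≤ C := le_trans (abs_nonneg _) hlapl
    rw [hPdef]
    simp only [Real.norm_eq_abs]
    rw [abs_mul, abs_mul, abs_of_pos hp1, abs_of_nonneg hlog0]
    calc p.1 * (Real.log (r / p.1) * |lapl f ((p.1:ℂ) * Complex.exp ((p.2:ℂ) * Complex.I))|)
        ≤ p.1 * (Real.log (r / p.1) * C) := by
          apply mul_le_mul_of_nonneg_left _ hp1.le
          exact mul_le_mul_of_nonneg_left hlapl hlog0
      _ = (p.1 * Real.log (r / p.1)) * C := by ring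
      _ ≤ r * C := mul_le_mul_of_nonneg_right hlogr hCnn
  have hPint : IntegrableOn P S volume :=
    ⟨hScont.aestronglyMeasurable hSmeas,
      HasFiniteIntegral.restrict_of_bounded (C := r * C) hSvol.lt_top
        ((ae_restrict_iff' hSmeas).2 (Filter.Eventually.of_forall hPbound))⟩
  -- Step 1 : polar change of variables
  have step1 : (∫ ζ in Metric.ball (0:ℂ) r, w ζ) = ∫ p in S, P p := by
    rw [← integral_indicator Metric.isOpen_ball.measurableSet,
      ← Complex.integral_comp_polarCoord_symm]
    have hTmeas : MeasurableSet polarCoord.target := polarCoord.open_target.measurableSet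
    have h1 : ∀ p ∈ polarCoord.target,
        p.1 • Set.indicator (Metric.ball (0:ℂ) r) w (Complex.polarCoord.symm p)
        = Set.indicator S P p := by
      intro p hp
      rw [polarCoord_target] at hp
      have hp1 : 0 < p.1 := hp.1
      have habs : ‖Complex.polarCoord.symm p‖ = p.1 := by
        rw [polar_symm_eq]
        simp only [norm_mul, Complex.norm_real, Real.norm_eq_abs, abs_exp_I, mul_one]
        exact abs_of_pos hp1
      by_cases hcase : p.1 < r
      · have hmem : Complex.polarCoord.symm p ∈ Metric.ball (0:ℂ) r := by
          simp only [Metric.mem_ball, Complex.dist_eq, sub_zero, habs]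
          exact hcase
        have hmemS : p ∈ S := ⟨⟨hp1, hcase⟩, hp.2⟩
        rw [Set.indicator_of_mem hmem, Set.indicator_of_mem hmemS, hwdef, hPdef]
        simp only [smul_eq_mul]
        rw [habs, polar_symm_eq]
      · have hmem : Complex.polarCoord.symm p ∉ Metric.ball (0:ℂ) r := by
          simp only [Metric.mem_ball, Complex.dist_eq, sub_zero, habs]
          exact hcase
        have hmemS : p ∉ S := fun h => hcase h.1.2
        rw [Set.indicator_of_notMem hmem, Set.indicator_of_notMem hmemS, smul_zero]
    rw [setIntegral_congr_fun hTmeas h1, setIntegral_indicator hSmeas,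
      Set.inter_eq_self_of_subset_right]
    rw [polarCoord_target, hSdef]
    exact Set.prod_mono (fun x hx => hx.1) (fun x hx => hx)
  -- Step 2 : Fubini
  have hPint' : Integrable P ((volume.restrict (Set.Ioo 0 r)).prod
      (volume.restrict (Set.Ioo (-π) π))) := by
    rw [Measure.prod_restrict, ← Measure.volume_eq_prod]
    exact hPint
  have step2 : (∫ p in S, P p) = ∫ ρ in Set.Ioo 0 r, ∫ θ in Set.Ioo (-π) π, P (ρ, θ) := by
    rw [hSdef, Measure.volume_eq_prod]
    exact setIntegral_prod P (by rwa [Measure.prod_restrict] at hPint')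
  -- inner integral evaluation
  have hInner : ∀ ρ ∈ Set.Ioo (0:ℝ) r, (∫ θ in Set.Ioo (-π) π, P (ρ, θ)) =
      (2 * π) * (Real.log (r / ρ) * (M1 f ρ + ρ * M2 f ρ)) := by
    intro ρ hρ
    have hρ0 : 0 < ρ := hρ.1
    have hρr : ρ < r := hρ.2
    have hρ1 : ρ < 1 := hρr.trans hr1
    have hpull : (∫ θ in Set.Ioo (-π) π, P (ρ, θ)) = (ρ * Real.log (r / ρ)) *
        ∫ θ in Set.Ioo (-π) π, lapl f ((ρ:ℂ) * Complex.exp ((θ:ℂ) * Complex.I)) := by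
      rw [← MeasureTheory.integral_const_mul]
      apply setIntegral_congr_fun measurableSet_Ioo
      intro θ _
      rw [hPdef]
      ring
    have hIoo : (∫ θ in Set.Ioo (-π) π, lapl f ((ρ:ℂ) * Complex.exp ((θ:ℂ) * Complex.I)))
        = ∫ θ in (-π)..π, lapl f ((ρ:ℂ) * Complex.exp ((θ:ℂ) * Complex.I)) := by
      rw [intervalIntegral.integral_of_le (by linarith), integral_Ioc_eq_integral_Ioo]
    have hper : Function.Periodic
        (fun θ : ℝ => lapl f ((ρ:ℂ) * Complex.exp ((θ:ℂ) * Complex.I))) (2 * π) := by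
      intro θ
      have : ((↑(θ + 2 * π) : ℂ) * Complex.I) = (θ:ℂ) * Complex.I + 2 * ↑π * Complex.I := by
        push_cast; ring
      simp only [this, Complex.exp_add, Complex.exp_two_pi_mul_I, mul_one]
    have hshift : (∫ θ in (-π)..π, lapl f ((ρ:ℂ) * Complex.exp ((θ:ℂ) * Complex.I)))
        = ∫ θ in (0:ℝ)..(2 * π), lapl f ((ρ:ℂ) * Complex.exp ((θ:ℂ) * Complex.I)) := by
      have h := hper.intervalIntegral_add_eq (-π) 0
      simpa [show -π + 2 * π = π by ring] using h
    have hscale : (∫ θ in (0:ℝ)..(2 * π), lapl f ((ρ:ℂ) * Complex.exp ((θ:ℂ) * Complex.I)))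
        = (2 * π) * ∫ t in (0:ℝ)..1, lapl f ((ρ:ℂ) * circ t) := by
      have h := intervalIntegral.smul_integral_comp_mul_left
        (f := fun θ : ℝ => lapl f ((ρ:ℂ) * Complex.exp ((θ:ℂ) * Complex.I)))
        (a := (0:ℝ)) (b := (1:ℝ)) (2 * π)
      rw [mul_zero, mul_one] at h
      rw [← h, smul_eq_mul]
      congr 1
      apply intervalIntegral.integral_congr
      intro t _
      have harg : ((↑(2 * π * t) : ℂ) * Complex.I) = 2 * (π:ℂ) * Complex.I * (t:ℂ) := by
        push_cast; ring
      show lapl f ((ρ:ℂ) * Complex.exp ((↑(2 * π * t) : ℂ) * Complex.I)) = lapl f ((ρ:ℂ) * circ t)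
      rw [harg, circ]
    have hρne : ρ ≠ 0 := hρ0.ne'
    rw [hpull, hIoo, hshift, hscale, stepB' hf hρ0 hρ1]
    field_simp
    ring
  have hφint : IntegrableOn (fun ρ => ∫ θ in Set.Ioo (-π) π, P (ρ, θ)) (Set.Ioo 0 r) volume :=
    hPint'.integral_prod_left
  have hψIoo : IntegrableOn (fun ρ => Real.log (r / ρ) * (M1 f ρ + ρ * M2 f ρ))
      (Set.Ioo 0 r) volume := by
    have h2 : IntegrableOn (fun ρ => (2 * π) * (Real.log (r / ρ) * (M1 f ρ + ρ * M2 f ρ)))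
        (Set.Ioo 0 r) volume := hφint.congr_fun hInner measurableSet_Ioo
    have h3 := h2.const_mul ((2 * π)⁻¹)
    have heq : (fun ρ => (2 * π)⁻¹ * ((2 * π) * (Real.log (r / ρ) * (M1 f ρ + ρ * M2 f ρ)))) =
        fun ρ => Real.log (r / ρ) * (M1 f ρ + ρ * M2 f ρ) := by
      funext ρ
      field_simp
    rwa [heq] at h3
  have hψIoc : IntegrableOn (fun ρ => Real.log (r / ρ) * (M1 f ρ + ρ * M2 f ρ))
      (Set.Ioc 0 r) volume := (integrableOn_Ioc_iff_integrableOn_Ioo enorm_ne_top).2 hψIoo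
  have hkey := stepC hf hr0 hrr' hr'1 hψIoc
  have harea : (∫ ζ in Metric.ball (0:ℂ) r, w ζ) = (2 * π) * (M f r - M f 0) := by
    rw [step1, step2]
    have e1 : (∫ ρ in Set.Ioo 0 r, (∫ θ in Set.Ioo (-π) π, P (ρ, θ))) =
        ∫ ρ in Set.Ioo 0 r, (2 * π) * (Real.log (r / ρ) * (M1 f ρ + ρ * M2 f ρ)) :=
      setIntegral_congr_fun measurableSet_Ioo hInner
    rw [e1, MeasureTheory.integral_const_mul, ← integral_Ioc_eq_integral_Ioo, hkey]
  have hM0 : M f 0 = f 0 := by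
    rw [M]
    simp
  have hgoal : (∫ θ in (0:ℝ)..1, f (r * Complex.exp (2 * Real.pi * Complex.I * θ))) = M f r :=
    rfl
  rw [hgoal, harea, ← hM0]
  field_simp
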